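/- Solutions of the unified (Lagrangian–Hamiltonian) Herglotz system with nowhere-vanishing multiplier satisfy the generalized Herglotz–Euler–Lagrange equation: let L : ℝ³ → ℝ be differentiable and let q, v, z, p, μ : ℝ → ℝ be differentiable functions satisfying the unified Herglotz system with μ(t) ≠ 0 for all t. Then the function t ↦ (∂L/∂v)(q(t),v(t),z(t)) is differentiable and (d/dt)[(∂L/∂v)(q(t),v(t),z(t))] = (∂L/∂q)(q(t),v(t),z(t)) + (∂L/∂z)(q(t),v(t),z(t))·(∂L/∂v)(q(t),v(t),z(t)) for all t. -/

import Mathlib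

/-- Partial derivative of the Herglotz Lagrangian `L(q,v,z)` with respect to `q`. -/
noncomputable def Lq (L : ℝ × ℝ × ℝ → ℝ) (q v z : ℝ) : ℝ :=
  deriv (fun s => L (s, v, z)) q

/-- Partial derivative of the Herglotz Lagrangian `L(q,v,z)` with respect to `v`. -/
noncomputable def Lv (L : ℝ × ℝ × ℝ → ℝ) (q v z : ℝ) : ℝ :=
  deriv (fun s => L (q, s, z)) v

/-- Partial derivative of the Herglotz Lagrangian `L(q,v,z)` with respect to `z`. -/
noncomputable def Lz (L : ℝ × ℝ × ℝ → ℝ) (q v z : ℝ) : ℝ :=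
  deriv (fun s => L (q, v, s)) z

/-- The unified (Lagrangian–Hamiltonian) Herglotz system for curves `q, v, z, p, μ`. -/
def UnifiedHerglotz (L : ℝ × ℝ × ℝ → ℝ) (q v z p μ : ℝ → ℝ) : Prop :=
  (∀ t, deriv q t = v t) ∧
  (∀ t, deriv z t = L (q t, v t, z t)) ∧
  (∀ t, deriv μ t = -μ t * Lz L (q t) (v t) (z t)) ∧
  (∀ t, deriv p t = μ t * Lq L (q t) (v t) (z t)) ∧
  (∀ t, p t = μ t * Lv L (q t) (v t) (z t))

/-- Solutions of the unified Herglotz system with nowhere-vanishing multiplier satisfy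
the generalized Herglotz–Euler–Lagrange equation. -/
theorem unifiedHerglotz_implies_herglotzEulerLagrange
    (L : ℝ × ℝ × ℝ → ℝ) (hL : Differentiable ℝ L)
    (q v z p μ : ℝ → ℝ)
    (hq : Differentiable ℝ q) (hv : Differentiable ℝ v) (hz : Differentiable ℝ z)
    (hp : Differentiable ℝ p) (hμ : Differentiable ℝ μ)
    (hsys : UnifiedHerglotz L q v z p μ)
    (hμne : ∀ t, μ t ≠ 0) :
    Differentiable ℝ (fun t => Lv L (q t) (v t) (z t)) ∧
    ∀ t, deriv (fun s => Lv L (q s) (v s) (z s)) t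
        = Lq L (q t) (v t) (z t) + Lz L (q t) (v t) (z t) * Lv L (q t) (v t) (z t) := by
  obtain ⟨hq', hz', hμ', hp', hpv⟩ := hsys
  have heq : (fun t => Lv L (q t) (v t) (z t)) = fun t => p t / μ t := by
    funext t
    rw [hpv t, mul_div_assoc]
    rw [mul_comm, div_mul_cancel₀ _ (hμne t)]
  have hdiff : Differentiable ℝ (fun t => p t / μ t) := hp.div hμ hμne
  refine ⟨heq ▸ hdiff, fun t => ?_⟩
  rw [heq, deriv_fun_div (hp t) (hμ t) (hμne t), hp' t, hμ' t, hpv t]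
  have h := hμne t
  field_simp
  ring
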